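/- arXiv:2207.12507 — 2 statements merged into one kernel-verified Lean document; each statement's English description precedes it below -/
import Mathlib

section
/- Let G be a bipartite-like flow network with source s, job vertices J, machine-node vertices M, and sink t, where edge s→j has capacity p(j), edge j→i (for i in a set D(j) ⊆ M) has capacity x(i), and edge i→t has capacity g·x(i), with p(j), x(i) nonnegative reals and g a positive real. Then the maximum s-t flow equals ∑_j p(j) if and only if for every subset J' ⊆ J, ∑_{i∈M} min(|{j ∈ J' : i ∈ D(j)}|, g)·x(i) ≥ ∑_{j∈J'} p(j). -/
open Finset

private def SchedRel {J M : Type*} (D : J → Finset M) (x : M → ℝ) (y : J → M → ℝ) :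
    J ⊕ M → J ⊕ M → Prop := fun a b =>
  match a, b with
  | .inl j, .inr i => i ∈ D j ∧ y j i < x i
  | .inr i, .inl j => i ∈ D j ∧ 0 < y j i
  | _, _ => False

private lemma sum_ite_row {J M : Type*} [Fintype M] [DecidableEq J] [DecidableEq M]
    (j : J) (i0 : M) (δ : ℝ) (a : J) :
    ∑ b, (if a = j ∧ b = i0 then δ else 0) = if a = j then δ else 0 := by
  by_cases h : a = j <;> simp [h]

private lemma sum_ite_col {J M : Type*} [Fintype J] [DecidableEq J] [DecidableEq M]
    (j : J) (i0 : M) (δ : ℝ) (b : M) :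
    ∑ a, (if a = j ∧ b = i0 then δ else 0) = if b = i0 then δ else 0 := by
  by_cases h : b = i0 <;> simp [h]

/-- Augmenting-path lemma. -/
private lemma sched_aug {J M : Type*} [Fintype J] [Fintype M]
    (D : J → Finset M) (x : M → ℝ) (g : ℝ) (y : J → M → ℝ)
    (hy0 : ∀ j i, 0 ≤ y j i) (hyD : ∀ j i, i ∉ D j → y j i = 0)
    (hyx : ∀ j i, y j i ≤ x i) (hyg : ∀ i, ∑ j, y j i ≤ g * x i)
    (itgt : M) (hslack : ∑ j, y j itgt < g * x itgt)
    (v : J ⊕ M) (hv : Relation.ReflTransGen (SchedRel D x y) v (Sum.inr itgt)) :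
    Sum.elim
      (fun j => ∃ C : ℝ, 0 ≤ C ∧ ∃ ε : ℝ, 0 < ε ∧ ∀ δ : ℝ, 0 < δ → δ ≤ ε →
        ∃ y' : J → M → ℝ, (∀ j' i', 0 ≤ y' j' i') ∧ (∀ j' i', i' ∉ D j' → y' j' i' = 0) ∧
          (∀ j' i', y' j' i' ≤ x i') ∧ (∀ i', ∑ j', y' j' i' ≤ g * x i') ∧
          (∑ i', y' j i' = ∑ i', y j i' + δ) ∧
          (∀ j', j' ≠ j → ∑ i', y' j' i' = ∑ i', y j' i') ∧
          (∀ j' i', |y' j' i' - y j' i'| ≤ C * δ))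
      (fun i => ∃ C : ℝ, 0 ≤ C ∧ ∃ ε : ℝ, 0 < ε ∧ ∀ δ : ℝ, 0 < δ → δ ≤ ε →
        ∃ y' : J → M → ℝ, (∀ j' i', 0 ≤ y' j' i') ∧ (∀ j' i', i' ∉ D j' → y' j' i' = 0) ∧
          (∀ j' i', y' j' i' ≤ x i') ∧ (∑ j', y' j' i ≤ g * x i - δ) ∧
          (∀ i', i' ≠ i → ∑ j', y' j' i' ≤ g * x i') ∧
          (∀ j', ∑ i', y' j' i' = ∑ i', y j' i') ∧
          (∀ j' i', |y' j' i' - y j' i'| ≤ C * δ)) v := by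
  classical
  induction hv using Relation.ReflTransGen.head_induction_on with
  | refl =>
    refine ⟨0, le_refl 0, g * x itgt - ∑ j, y j itgt, by linarith, fun δ hδ hδε => ?_⟩
    exact ⟨y, hy0, hyD, hyx, by linarith, fun i' _ => hyg i', fun j' => rfl,
      fun j' i' => by simp⟩
  | head h' hrest ih =>
    rename_i a c
    rcases a with ja | ia
    · rcases c with jc | ic
      · exact h'.elim
      · -- forward edge ja → ic : ic ∈ D ja, y ja ic < x ic
        obtain ⟨hD, hlt⟩ : ic ∈ D ja ∧ y ja ic < x ic := h'
        simp only [Sum.elim_inr] at ih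
        simp only [Sum.elim_inl]
        obtain ⟨C, hC, ε, hε, hmain⟩ := ih
        have hC1 : (0:ℝ) < C + 1 := by linarith
        refine ⟨C + 1, by linarith, min ε ((x ic - y ja ic) / (C + 1)),
          lt_min hε (div_pos (by linarith) hC1), fun δ hδ hδε => ?_⟩
        obtain ⟨y', h1, h2, h3, h4, h5, h6, h7⟩ :=
          hmain δ hδ (le_trans hδε (min_le_left _ _))
        have hδ2 : (C + 1) * δ ≤ x ic - y ja ic := by
          have h := le_trans hδε (min_le_right _ _)
          have := mul_le_mul_of_nonneg_left h (le_of_lt hC1)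
          rwa [mul_div_cancel₀ _ (ne_of_gt hC1)] at this
        have hCd : (C + 1) * δ = C * δ + δ := by ring
        set y'' : J → M → ℝ := fun a b => y' a b + (if a = ja ∧ b = ic then δ else 0)
          with hy''
        have hdiff : ∀ a b, y'' a b = y' a b + (if a = ja ∧ b = ic then δ else 0) :=
          fun a b => rfl
        have hrow : ∀ a, ∑ i', y'' a i' = (∑ i', y' a i') + (if a = ja then δ else 0) := by
          intro a
          simp only [hdiff]
          rw [Finset.sum_add_distrib, sum_ite_row ja ic δ a]
        have hcol : ∀ b, ∑ j', y'' j' b = (∑ j', y' j' b) + (if b = ic then δ else 0) := by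
          intro b
          simp only [hdiff]
          rw [Finset.sum_add_distrib, sum_ite_col ja ic δ b]
        refine ⟨y'', ?_, ?_, ?_, ?_, ?_, ?_, ?_⟩
        · intro j' i'
          rw [hdiff]
          have := h1 j' i'
          split_ifs <;> linarith
        · intro j' i' hni
          rw [hdiff, h2 j' i' hni]
          split_ifs with h
          · exact absurd (h.2 ▸ h.1 ▸ hD) hni
          · ring
        · intro j' i'
          rw [hdiff]
          split_ifs with h
          · have h7' := abs_le.mp (h7 j' i')
            rw [h.1, h.2] at *
            linarith [h7'.2]
          · linarith [h3 j' i']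
        · intro i'
          rw [hcol i']
          split_ifs with h
          · subst h; linarith
          · linarith [h5 i' h]
        · rw [hrow ja, if_pos rfl, h6 ja]
        · intro j' hj'
          rw [hrow j', if_neg hj', h6 j']
          ring
        · intro j' i'
          rw [hdiff]
          have := abs_le.mp (h7 j' i')
          rw [abs_le]
          split_ifs <;> constructor <;> linarith
    · rcases c with jc | ic
      · -- backward edge ia → jc : ia ∈ D jc, 0 < y jc ia
        obtain ⟨hD, hpos⟩ : ia ∈ D jc ∧ 0 < y jc ia := h'
        simp only [Sum.elim_inl] at ih
        simp only [Sum.elim_inr]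
        obtain ⟨C, hC, ε, hε, hmain⟩ := ih
        have hC1 : (0:ℝ) < C + 1 := by linarith
        refine ⟨C + 1, by linarith, min ε (y jc ia / (C + 1)),
          lt_min hε (div_pos hpos hC1), fun δ hδ hδε => ?_⟩
        obtain ⟨y', h1, h2, h3, h4, h5, h6, h7⟩ :=
          hmain δ hδ (le_trans hδε (min_le_left _ _))
        have hδ2 : (C + 1) * δ ≤ y jc ia := by
          have h := le_trans hδε (min_le_right _ _)
          have := mul_le_mul_of_nonneg_left h (le_of_lt hC1)
          rwa [mul_div_cancel₀ _ (ne_of_gt hC1)] at this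
        have hCd : (C + 1) * δ = C * δ + δ := by ring
        set y'' : J → M → ℝ := fun a b => y' a b - (if a = jc ∧ b = ia then δ else 0)
          with hy''
        have hdiff : ∀ a b, y'' a b = y' a b - (if a = jc ∧ b = ia then δ else 0) :=
          fun a b => rfl
        have hrow : ∀ a, ∑ i', y'' a i' = (∑ i', y' a i') - (if a = jc then δ else 0) := by
          intro a
          simp only [hdiff]
          rw [Finset.sum_sub_distrib, sum_ite_row jc ia δ a]
        have hcol : ∀ b, ∑ j', y'' j' b = (∑ j', y' j' b) - (if b = ia then δ else 0) := by
          intro b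
          simp only [hdiff]
          rw [Finset.sum_sub_distrib, sum_ite_col jc ia δ b]
        refine ⟨y'', ?_, ?_, ?_, ?_, ?_, ?_, ?_⟩
        · intro j' i'
          rw [hdiff]
          split_ifs with h
          · have h7' := abs_le.mp (h7 j' i')
            rw [h.1, h.2] at *
            linarith [h7'.1]
          · linarith [h1 j' i']
        · intro j' i' hni
          rw [hdiff, h2 j' i' hni]
          split_ifs with h
          · exact absurd (h.2 ▸ h.1 ▸ hD) hni
          · ring
        · intro j' i'
          rw [hdiff]
          have := h3 j' i'
          split_ifs <;> linarith
        · rw [hcol ia, if_pos rfl]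
          linarith [h4 ia]
        · intro i' hi'
          rw [hcol i', if_neg hi']
          linarith [h4 i']
        · intro j'
          rw [hrow j']
          split_ifs with h
          · subst h
            rw [h5]
            ring
          · rw [h6 j' h]
            ring
        · intro j' i'
          rw [hdiff]
          have := abs_le.mp (h7 j' i')
          rw [abs_le]
          split_ifs <;> constructor <;> linarith
      · exact h'.elim

/-- hard direction -/
private theorem sched_hard {J M : Type*} [Fintype J] [Fintype M] [DecidableEq M]
    (D : J → Finset M) (p : J → ℝ) (x : M → ℝ) (g : ℝ)
    (hp : ∀ j, 0 ≤ p j) (hx : ∀ i, 0 ≤ x i) (hg : 0 < g)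
    (hcond : ∀ J' : Finset J,
      ∑ j ∈ J', p j ≤
        ∑ i, min ((J'.filter (fun j => i ∈ D j)).card : ℝ) g * x i) :
    (∃ y : J → M → ℝ,
      (∀ j i, 0 ≤ y j i) ∧
      (∀ j i, i ∉ D j → y j i = 0) ∧
      (∀ j, p j ≤ ∑ i, y j i) ∧
      (∀ j i, y j i ≤ x i) ∧
      (∀ i, ∑ j, y j i ≤ g * x i)) := by
  classical
  -- the compact feasible region (with demands as upper bounds)
  set K : Set (J → M → ℝ) := {y | (∀ j i, 0 ≤ y j i) ∧ (∀ j i, i ∉ D j → y j i = 0) ∧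
      (∀ j i, y j i ≤ x i) ∧ (∀ i, ∑ j, y j i ≤ g * x i) ∧ (∀ j, ∑ i, y j i ≤ p j)}
      with hK
  have h0K : (0 : J → M → ℝ) ∈ K := by
    refine ⟨fun j i => le_refl 0, fun j i _ => rfl, fun j i => hx i,
      fun i => ?_, fun j => ?_⟩
    · simp only [Pi.zero_apply, sum_const, smul_zero]
      exact mul_nonneg hg.le (hx i)
    · simp only [Pi.zero_apply, sum_const, smul_zero]
      exact hp j
  have hKc : IsClosed K := by
    have e1 : IsClosed {y : J → M → ℝ | ∀ j i, 0 ≤ y j i} := by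
      have : {y : J → M → ℝ | ∀ j i, 0 ≤ y j i} = ⋂ j, ⋂ i, {y | 0 ≤ y j i} := by
        ext y; simp
      rw [this]
      exact isClosed_iInter fun j => isClosed_iInter fun i =>
        isClosed_le continuous_const ((continuous_apply i).comp (continuous_apply j))
    have e2 : IsClosed {y : J → M → ℝ | ∀ j i, i ∉ D j → y j i = 0} := by
      have : {y : J → M → ℝ | ∀ j i, i ∉ D j → y j i = 0} =
          ⋂ j, ⋂ i, {y | i ∉ D j → y j i = 0} := by ext y; simp
      rw [this]
      refine isClosed_iInter fun j => isClosed_iInter fun i => ?_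
      by_cases h : i ∈ D j
      · simp [h]
      · have : {y : J → M → ℝ | i ∉ D j → y j i = 0} = {y | y j i = 0} := by
          ext y; simp [h]
        rw [this]
        exact isClosed_eq ((continuous_apply i).comp (continuous_apply j)) continuous_const
    have e3 : IsClosed {y : J → M → ℝ | ∀ j i, y j i ≤ x i} := by
      have : {y : J → M → ℝ | ∀ j i, y j i ≤ x i} = ⋂ j, ⋂ i, {y | y j i ≤ x i} := by
        ext y; simp
      rw [this]
      exact isClosed_iInter fun j => isClosed_iInter fun i =>
        isClosed_le ((continuous_apply i).comp (continuous_apply j)) continuous_const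
    have e4 : IsClosed {y : J → M → ℝ | ∀ i, ∑ j, y j i ≤ g * x i} := by
      have : {y : J → M → ℝ | ∀ i, ∑ j, y j i ≤ g * x i} =
          ⋂ i, {y | ∑ j, y j i ≤ g * x i} := by ext y; simp
      rw [this]
      exact isClosed_iInter fun i => isClosed_le
        (continuous_finset_sum _ fun j _ => (continuous_apply i).comp (continuous_apply j))
        continuous_const
    have e5 : IsClosed {y : J → M → ℝ | ∀ j, ∑ i, y j i ≤ p j} := by
      have : {y : J → M → ℝ | ∀ j, ∑ i, y j i ≤ p j} =
          ⋂ j, {y | ∑ i, y j i ≤ p j} := by ext y; simp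
      rw [this]
      exact isClosed_iInter fun j => isClosed_le
        (continuous_finset_sum _ fun i _ => (continuous_apply i).comp (continuous_apply j))
        continuous_const
    have : K = {y : J → M → ℝ | ∀ j i, 0 ≤ y j i} ∩
        ({y | ∀ j i, i ∉ D j → y j i = 0} ∩ ({y | ∀ j i, y j i ≤ x i} ∩
        ({y | ∀ i, ∑ j, y j i ≤ g * x i} ∩ {y | ∀ j, ∑ i, y j i ≤ p j}))) := by
      rfl
    rw [this]
    exact e1.inter (e2.inter (e3.inter (e4.inter e5)))
  have hKb : K ⊆ Set.univ.pi fun _ : J => Set.univ.pi fun i : M => Set.Icc 0 (x i) := by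
    intro y hy
    simp only [Set.mem_pi, Set.mem_univ, forall_true_left, Set.mem_Icc]
    exact fun j i => ⟨hy.1 j i, hy.2.2.1 j i⟩
  have hKcomp : IsCompact K :=
    (isCompact_univ_pi fun _ => isCompact_univ_pi fun i => isCompact_Icc).of_isClosed_subset
      hKc hKb
  obtain ⟨y, hyK, hymax⟩ := hKcomp.exists_isMaxOn (f := fun y : J → M → ℝ => ∑ j, ∑ i, y j i) ⟨0, h0K⟩
    (Continuous.continuousOn (continuous_finset_sum _ fun j _ =>
      continuous_finset_sum _ fun i _ => (continuous_apply i).comp (continuous_apply j)))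
  obtain ⟨hy0, hyD, hyx, hyg, hyp'⟩ := hyK
  by_cases hfeas : ∀ j, p j ≤ ∑ i, y j i
  · exact ⟨y, hy0, hyD, hfeas, hyx, hyg⟩
  exfalso
  push_neg at hfeas
  obtain ⟨j0, hj0⟩ := hfeas
  set Rch : J ⊕ M → Prop := fun v => Relation.ReflTransGen (SchedRel D x y) (Sum.inl j0) v
    with hRch
  set A : Finset J := univ.filter fun j => Rch (Sum.inl j) with hA
  set B : Finset M := univ.filter fun i => Rch (Sum.inr i) with hB
  have hj0A : j0 ∈ A := mem_filter.mpr ⟨mem_univ _, Relation.ReflTransGen.refl⟩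
  by_cases hsl : ∃ i ∈ B, ∑ j, y j i < g * x i
  · -- Case 1: augmenting path exists, contradict maximality
    obtain ⟨it, hitB, hslack⟩ := hsl
    have hreach : Relation.ReflTransGen (SchedRel D x y) (Sum.inl j0) (Sum.inr it) :=
      (mem_filter.mp hitB).2
    have haug := sched_aug D x g y hy0 hyD hyx hyg it hslack (Sum.inl j0) hreach
    simp only [Sum.elim_inl] at haug
    obtain ⟨C, hC, ε, hε, hmain⟩ := haug
    have hd : 0 < p j0 - ∑ i, y j0 i := by linarith
    obtain ⟨y', h1, h2, h3, h4, h5, h6, h7⟩ :=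
      hmain (min ε (p j0 - ∑ i, y j0 i)) (lt_min hε hd) (min_le_left _ _)
    have hy'K : y' ∈ K := by
      refine ⟨h1, h2, h3, h4, fun j => ?_⟩
      by_cases h : j = j0
      · subst h
        rw [h5]
        have := min_le_right ε (p j - ∑ i, y j i)
        linarith
      · rw [h6 j h]
        exact hyp' j
    have hlt2 : ∑ j, ∑ i, y j i < ∑ j, ∑ i, y' j i := by
      have hrow : ∀ j, ∑ i, y' j i =
          ∑ i, y j i + (if j = j0 then min ε (p j0 - ∑ i, y j0 i) else 0) := by
        intro j
        by_cases h : j = j0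
        · subst h
          rw [h5, if_pos rfl]
        · rw [h6 j h, if_neg h]
          ring
      rw [Finset.sum_congr rfl fun j _ => hrow j, Finset.sum_add_distrib]
      have hs : ∑ j, (if j = j0 then min ε (p j0 - ∑ i, y j0 i) else 0) =
          min ε (p j0 - ∑ i, y j0 i) := by simp
      rw [hs]
      linarith [lt_min hε hd]
    exact absurd (hymax hy'K) (not_le.mpr hlt2)
  · -- Case 2: the reachable set violates the covering condition
    push_neg at hsl
    have hcl2 : ∀ i ∈ B, ∀ j, i ∈ D j → 0 < y j i → j ∈ A := by
      intro i hi j hD hpos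
      exact mem_filter.mpr ⟨mem_univ _, Relation.ReflTransGen.tail (mem_filter.mp hi).2
        (show SchedRel D x y (Sum.inr i) (Sum.inl j) from ⟨hD, hpos⟩)⟩
    have hzero : ∀ i ∈ B, ∀ j, j ∉ A → y j i = 0 := by
      intro i hi j hj
      by_cases hD : i ∈ D j
      · by_contra hne
        exact hj (hcl2 i hi j hD (lt_of_le_of_ne (hy0 j i) (Ne.symm hne)))
      · exact hyD j i hD
    have hsat : ∀ j ∈ A, ∀ i, i ∈ D j → i ∉ B → y j i = x i := by
      intro j hj i hD hiB
      refine le_antisymm (hyx j i) (not_lt.mp fun hlt => hiB ?_)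
      exact mem_filter.mpr ⟨mem_univ _, Relation.ReflTransGen.tail (mem_filter.mp hj).2
        (show SchedRel D x y (Sum.inl j) (Sum.inr i) from ⟨hD, hlt⟩)⟩
    have key : ∑ i, min ((A.filter (fun j => i ∈ D j)).card : ℝ) g * x i ≤
        ∑ j ∈ A, ∑ i, y j i := by
      calc ∑ i, min ((A.filter (fun j => i ∈ D j)).card : ℝ) g * x i
          ≤ ∑ i, ∑ j ∈ A, y j i := by
            refine sum_le_sum fun i _ => ?_
            by_cases hiB : i ∈ B
            · have h1 : ∑ j ∈ A, y j i = ∑ j, y j i :=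
                Finset.sum_subset (subset_univ A) fun j _ hj => hzero i hiB j hj
              calc min ((A.filter (fun j => i ∈ D j)).card : ℝ) g * x i
                  ≤ g * x i := mul_le_mul_of_nonneg_right (min_le_right _ _) (hx i)
                _ ≤ ∑ j, y j i := hsl i hiB
                _ = ∑ j ∈ A, y j i := h1.symm
            · calc min ((A.filter (fun j => i ∈ D j)).card : ℝ) g * x i
                  ≤ ((A.filter (fun j => i ∈ D j)).card : ℝ) * x i :=
                    mul_le_mul_of_nonneg_right (min_le_left _ _) (hx i)
                _ = ∑ _j ∈ A.filter (fun j => i ∈ D j), x i := by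
                    rw [sum_const, nsmul_eq_mul]
                _ = ∑ j ∈ A.filter (fun j => i ∈ D j), y j i := by
                    refine sum_congr rfl fun j hj => ?_
                    have hm := mem_filter.mp hj
                    exact (hsat j hm.1 i hm.2 hiB).symm
                _ ≤ ∑ j ∈ A, y j i :=
                    sum_le_sum_of_subset_of_nonneg (filter_subset _ _)
                      fun j _ _ => hy0 j i
        _ = ∑ j ∈ A, ∑ i, y j i := Finset.sum_comm
    have hstrict : ∑ j ∈ A, ∑ i, y j i < ∑ j ∈ A, p j :=
      Finset.sum_lt_sum (fun j _ => hyp' j) ⟨j0, hj0A, hj0⟩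
    have := hcond A
    linarith


/-- Feasibility of the fractional schedule (equivalently, max s-t flow value equals
`∑ j, p j` in the 4-layer network) iff the covering condition holds for all `J' ⊆ J`. -/
theorem stmt_8 {J M : Type*} [Fintype J] [Fintype M] [DecidableEq M]
    (D : J → Finset M) (p : J → ℝ) (x : M → ℝ) (g : ℝ)
    (hp : ∀ j, 0 ≤ p j) (hx : ∀ i, 0 ≤ x i) (hg : 0 < g) :
    (∃ y : J → M → ℝ,
      (∀ j i, 0 ≤ y j i) ∧
      (∀ j i, i ∉ D j → y j i = 0) ∧
      (∀ j, p j ≤ ∑ i, y j i) ∧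
      (∀ j i, y j i ≤ x i) ∧
      (∀ i, ∑ j, y j i ≤ g * x i)) ↔
    (∀ J' : Finset J,
      ∑ j ∈ J', p j ≤
        ∑ i, min ((J'.filter (fun j => i ∈ D j)).card : ℝ) g * x i) := by
  classical
  constructor
  · rintro ⟨y, hy0, hyD, hyp, hyx, hyg⟩ J'
    calc ∑ j ∈ J', p j ≤ ∑ j ∈ J', ∑ i, y j i := sum_le_sum fun j _ => hyp j
      _ = ∑ i, ∑ j ∈ J', y j i := Finset.sum_comm
      _ ≤ ∑ i, min ((J'.filter (fun j => i ∈ D j)).card : ℝ) g * x i := by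
        refine sum_le_sum fun i _ => ?_
        rw [min_mul_of_nonneg _ _ (hx i)]
        refine le_min ?_ ?_
        · have : ∑ j ∈ J', y j i = ∑ j ∈ J'.filter (fun j => i ∈ D j), y j i := by
            rw [sum_filter]
            refine sum_congr rfl fun j _ => ?_
            by_cases h : i ∈ D j
            · simp [h]
            · simp [h, hyD j i h]
          rw [this]
          calc ∑ j ∈ J'.filter (fun j => i ∈ D j), y j i
              ≤ ∑ _j ∈ J'.filter (fun j => i ∈ D j), x i :=
                sum_le_sum fun j _ => hyx j i
            _ = ((J'.filter (fun j => i ∈ D j)).card : ℝ) * x i := by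
                rw [sum_const, nsmul_eq_mul]
        · calc ∑ j ∈ J', y j i ≤ ∑ j, y j i :=
              sum_le_sum_of_subset_of_nonneg (subset_univ J') (fun j _ _ => hy0 j i)
            _ ≤ g * x i := hyg i
  · intro hcond
    exact sched_hard D p x g hp hx hg hcond
end

section
/- In the covering condition of the feasibility lemma, it suffices to check sets J' that are 'irreducible': if J' contains a job j with p(j) ≤ ∑_{i ∈ D(j), |{j'∈J' : i∈D(j')}| ≤ g} x(i), then the covering inequality for J' is implied by the covering inequality for J' \ {j}. -/
/-- Irreducibility: if `j ∈ J'` satisfies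
`p j ≤ ∑_{i ∈ D j, |{j' ∈ J' : i ∈ D j'}| ≤ g} x i`, then the covering inequality
for `J'` follows from the covering inequality for `J' \ {j}`. -/
theorem stmt_9 {J M : Type*} [Fintype J] [Fintype M] [DecidableEq J] [DecidableEq M]
    (D : J → Finset M) (p : J → ℝ) (x : M → ℝ) (g : ℕ)
    (hp : ∀ j, 0 ≤ p j) (hx : ∀ i, 0 ≤ x i) (hg : 0 < g)
    (J' : Finset J) (j : J) (hj : j ∈ J')
    (hred : p j ≤ ∑ i ∈ (D j).filter
        (fun i => ((J'.filter (fun j' => i ∈ D j')).card ≤ g)), x i)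
    (hcov : ∑ j' ∈ J'.erase j, p j' ≤
      ∑ i, min (((J'.erase j).filter (fun j' => i ∈ D j')).card : ℝ) g * x i) :
    ∑ j' ∈ J', p j' ≤
      ∑ i, min ((J'.filter (fun j' => i ∈ D j')).card : ℝ) g * x i := by
  classical
  have hsum : ∑ j' ∈ J', p j' = p j + ∑ j' ∈ J'.erase j, p j' :=
    (Finset.add_sum_erase _ _ hj).symm
  rw [hsum]
  have hfil : ∑ i ∈ (D j).filter
      (fun i => ((J'.filter (fun j' => i ∈ D j')).card ≤ g)), x i
      = ∑ i, if i ∈ (D j).filter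
          (fun i => ((J'.filter (fun j' => i ∈ D j')).card ≤ g)) then x i else 0 := by
    rw [Finset.sum_ite_mem, Finset.univ_inter]
  have key : ∀ i, min (((J'.erase j).filter (fun j' => i ∈ D j')).card : ℝ) g * x i
      + (if i ∈ (D j).filter
          (fun i => ((J'.filter (fun j' => i ∈ D j')).card ≤ g)) then x i else 0)
      ≤ min ((J'.filter (fun j' => i ∈ D j')).card : ℝ) g * x i := by
    intro i
    have hE : (J'.erase j).filter (fun j' => i ∈ D j')
        = (J'.filter (fun j' => i ∈ D j')).erase j := by
      ext a; simp [Finset.mem_erase, Finset.mem_filter]; tauto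
    rw [hE]
    set n := (J'.filter (fun j' => i ∈ D j')).card with hn
    by_cases hiD : i ∈ D j
    · have hjf : j ∈ J'.filter (fun j' => i ∈ D j') := Finset.mem_filter.2 ⟨hj, hiD⟩
      have hcard : ((J'.filter (fun j' => i ∈ D j')).erase j).card = n - 1 :=
        Finset.card_erase_of_mem hjf
      have hn1 : 1 ≤ n := Finset.card_pos.2 ⟨j, hjf⟩
      rw [hcard]
      by_cases hng : n ≤ g
      · simp only [Finset.mem_filter, hiD, true_and, ← hn, hng, if_pos]
        have h1 : ((n - 1 : ℕ) : ℝ) = (n : ℝ) - 1 := by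
          push_cast [hn1]; ring
        have hmin1 : min ((n - 1 : ℕ) : ℝ) (g : ℝ) = (n : ℝ) - 1 := by
          rw [h1]; exact min_eq_left (by
            have : (n : ℝ) ≤ g := by exact_mod_cast hng
            linarith)
        have hmin2 : min (n : ℝ) (g : ℝ) = (n : ℝ) :=
          min_eq_left (by exact_mod_cast hng)
        rw [hmin1, hmin2]; nlinarith [hx i]
      · simp only [Finset.mem_filter, hiD, true_and, ← hn, hng, if_false]
        have hgn : g ≤ n - 1 := by omega
        have hmin1 : min ((n - 1 : ℕ) : ℝ) (g : ℝ) = (g : ℝ) :=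
          min_eq_right (by exact_mod_cast hgn)
        have hmin2 : min (n : ℝ) (g : ℝ) = (g : ℝ) :=
          min_eq_right (by exact_mod_cast (le_of_not_ge hng))
        rw [hmin1, hmin2]; simp
    · have hjf : j ∉ J'.filter (fun j' => i ∈ D j') := by
        simp [Finset.mem_filter, hiD]
      rw [Finset.erase_eq_of_notMem hjf]
      simp [Finset.mem_filter, hiD, hn]
  calc p j + ∑ j' ∈ J'.erase j, p j'
      ≤ (∑ i, if i ∈ (D j).filter
          (fun i => ((J'.filter (fun j' => i ∈ D j')).card ≤ g)) then x i else 0)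
        + ∑ i, min (((J'.erase j).filter (fun j' => i ∈ D j')).card : ℝ) g * x i := by
        rw [← hfil]; exact add_le_add hred hcov
    _ = ∑ i, (min (((J'.erase j).filter (fun j' => i ∈ D j')).card : ℝ) g * x i
        + (if i ∈ (D j).filter
          (fun i => ((J'.filter (fun j' => i ∈ D j')).card ≤ g)) then x i else 0)) := by
        rw [Finset.sum_add_distrib]; ring
    _ ≤ ∑ i, min ((J'.filter (fun j' => i ∈ D j')).card : ℝ) g * x i :=
        Finset.sum_le_sum fun i _ => key i
end
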